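/- arXiv:2009.04415 — 6 statements merged into one kernel-verified Lean document; each statement's English description precedes it below -/
import Mathlib

section
/- Let R be a commutative differential ring and D a derivation of the matrix algebra M_n(R) extending the derivation of R. Then there exists a matrix X ∈ M_n(R) such that D(Y) = Y' + XY − YX for all Y ∈ M_n(R), where Y' denotes entrywise application of the derivation of R. Conversely, for any Z ∈ M_n(R), the map ∂_Z(Y) = Y' + ZY − YZ is a derivation of M_n(R) extending the derivation of R. -/
/-- The derivation `∂_Z : Y ↦ Y' + ZY - YZ` on a matrix algebra, where `Y'` is the
entrywise derivative. -/
def matDer {R : Type*} [CommRing R] (dR : Derivation ℤ R R) {ι : Type*} [Fintype ι]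
    [DecidableEq ι] (Z Y : Matrix ι ι R) : Matrix ι ι R :=
  Y.map ⇑dR + (Z * Y - Y * Z)

section Aux

variable {R : Type*} [CommRing R] (dR : Derivation ℤ R R) {ι : Type*} [Fintype ι] [DecidableEq ι]

omit [Fintype ι] [DecidableEq ι] in
theorem mapd_add (Y W : Matrix ι ι R) : (Y + W).map ⇑dR = Y.map ⇑dR + W.map ⇑dR := by
  ext i j; simp

theorem mapd_mul (Y W : Matrix ι ι R) :
    (Y * W).map ⇑dR = Y.map ⇑dR * W + Y * W.map ⇑dR := by
  ext i j
  simp only [Matrix.map_apply, Matrix.mul_apply, Matrix.add_apply, map_sum,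
    Derivation.leibniz, ← Finset.sum_add_distrib]
  exact Finset.sum_congr rfl fun k _ => by simp [smul_eq_mul]; ring

omit [Fintype ι] [DecidableEq ι] in
theorem mapd_smul (r : R) (Y : Matrix ι ι R) :
    (r • Y).map ⇑dR = dR r • Y + r • Y.map ⇑dR := by
  ext i j; simp [Derivation.leibniz]; ring

theorem mapd_alg (r : R) : (algebraMap R (Matrix ι ι R) r).map ⇑dR =
    algebraMap R (Matrix ι ι R) (dR r) := by
  ext i j
  simp [Matrix.algebraMap_matrix_apply]
  split <;> simp

theorem sum_basis_one (b : ι) :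
    ∑ a : ι, Matrix.single a b (1:R) * Matrix.single b a (1:R) = 1 := by
  have : ∀ a : ι, Matrix.single a b (1:R) * Matrix.single b a (1:R)
      = Matrix.single a a (1:R) := fun a => by
    rw [Matrix.single_mul_single_same, one_mul]
  rw [Finset.sum_congr rfl fun a _ => this a]
  ext i j
  simp [Matrix.sum_apply, Matrix.single, Matrix.one_apply, Finset.sum_ite_eq,
    and_comm, ite_and]

theorem exists_X (b : ι) (D : Matrix ι ι R → Matrix ι ι R)
    (hadd : ∀ Y W, D (Y + W) = D Y + D W)
    (hmul : ∀ Y W, D (Y * W) = D Y * W + Y * D W)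
    (hext : ∀ r : R, D (algebraMap R (Matrix ι ι R) r) =
      algebraMap R (Matrix ι ι R) (dR r)) :
    ∃ X : Matrix ι ι R, ∀ Y, D Y = matDer dR X Y := by
  have hD0 : D 0 = 0 := by
    have h := hadd 0 0
    rw [add_zero] at h
    exact left_eq_add.mp h
  set E : Matrix ι ι R → Matrix ι ι R := fun Y => D Y - Y.map ⇑dR with hE
  have hE0 : E 0 = 0 := by simp [hE, hD0]
  have hEadd : ∀ Y W, E (Y + W) = E Y + E W := fun Y W => by
    simp only [hE, hadd]
    have : (Y + W).map ⇑dR = Y.map ⇑dR + W.map ⇑dR := by ext i j; simp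
    rw [this]; abel
  have hEmul : ∀ Y W, E (Y * W) = E Y * W + Y * E W := fun Y W => by
    simp only [hE, hmul, mapd_mul dR]
    noncomm_ring
  have hEsmul : ∀ (r : R) (Y), E (r • Y) = r • E Y := fun r Y => by
    simp only [hE]
    rw [Algebra.smul_def r Y, hmul, hext]
    rw [← Algebra.smul_def r Y, mapd_smul dR, ← Algebra.smul_def (dR r) Y]
    rw [← Algebra.smul_def r (D Y)]
    rw [smul_sub]; abel
  set e : ι → ι → Matrix ι ι R := fun i j => Matrix.single i j (1:R) with he
  set X : Matrix ι ι R := ∑ a : ι, E (e a b) * e b a with hX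
  have key : ∀ i j, E (e i j) = X * e i j - e i j * X := by
    intro i j
    have h1 : X * e i j = E (e i b) * e b j := by
      rw [hX, Finset.sum_mul]
      rw [Finset.sum_eq_single i]
      · rw [mul_assoc, he]; rw [Matrix.single_mul_single_same, one_mul]
      · intro a _ ha
        rw [mul_assoc, he, Matrix.single_mul_single_of_ne (h := ha), mul_zero]
      · intro h; exact absurd (Finset.mem_univ i) h
    have h2 : e i j * X = E (e i b) * e b j - E (e i j) := by
      rw [hX, Finset.mul_sum]
      have term : ∀ a : ι, e i j * (E (e a b) * e b a)
          = E (e i j * e a b) * e b a - E (e i j) * (e a b * e b a) := fun a => by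
        have := hEmul (e i j) (e a b)
        have h' : e i j * E (e a b) = E (e i j * e a b) - E (e i j) * e a b := by
          rw [this]; abel
        rw [← mul_assoc, h', sub_mul, mul_assoc]
      rw [Finset.sum_congr rfl fun a _ => term a, Finset.sum_sub_distrib]
      congr 1
      · rw [Finset.sum_eq_single j]
        · rw [he]; rw [Matrix.single_mul_single_same, one_mul]
        · intro a _ ha
          have h0 : e i j * e a b = 0 :=
            Matrix.single_mul_single_of_ne (h := Ne.symm ha) ..
          rw [h0, hE0, zero_mul]
        · intro h; exact absurd (Finset.mem_univ j) h
      · rw [← Finset.mul_sum, he, sum_basis_one, mul_one]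
    rw [h1, h2]; abel
  refine ⟨X, fun Y => ?_⟩
  have main : E Y = X * Y - Y * X := by
    induction Y using Matrix.induction_on' with
    | h_zero => simp [hE0]
    | h_add p q hp hq => rw [hEadd, hp, hq]; noncomm_ring
    | h_std_basis i j x =>
      have : Matrix.single i j x = x • e i j := by
        rw [he, Matrix.smul_single, smul_eq_mul, mul_one]
      rw [this, hEsmul, key i j, smul_sub, mul_smul_comm, smul_mul_assoc]
  have main' : D Y - Y.map ⇑dR = X * Y - Y * X := main
  rw [matDer, ← main']; abel

theorem conv (Z : Matrix ι ι R) :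
      (∀ Y W, matDer dR Z (Y + W) = matDer dR Z Y + matDer dR Z W) ∧
      (∀ Y W, matDer dR Z (Y * W) = matDer dR Z Y * W + Y * matDer dR Z W) ∧
      (∀ r : R, matDer dR Z (algebraMap R (Matrix ι ι R) r) =
        algebraMap R (Matrix ι ι R) (dR r)) := by
  refine ⟨fun Y W => ?_, fun Y W => ?_, fun r => ?_⟩
  · simp only [matDer, mapd_add dR]; noncomm_ring
  · simp only [matDer, mapd_mul dR]; noncomm_ring
  · simp only [matDer, mapd_alg dR]
    have : Z * algebraMap R (Matrix ι ι R) r = algebraMap R (Matrix ι ι R) r * Z :=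
      (Algebra.commutes r Z).symm
    rw [this]; simp


end Aux

/-- Every derivation of `M_n(R)` extending the derivation of `R` is of the form
`∂_X` for some matrix `X`; conversely every `∂_Z` is such a derivation. -/
theorem stmt1 {R : Type*} [CommRing R] (dR : Derivation ℤ R R) (n : ℕ)
    (D : Matrix (Fin n) (Fin n) R → Matrix (Fin n) (Fin n) R)
    (hadd : ∀ Y W, D (Y + W) = D Y + D W)
    (hmul : ∀ Y W, D (Y * W) = D Y * W + Y * D W)
    (hext : ∀ r : R, D (algebraMap R (Matrix (Fin n) (Fin n) R) r) =
      algebraMap R (Matrix (Fin n) (Fin n) R) (dR r)) :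
    (∃ X : Matrix (Fin n) (Fin n) R, ∀ Y, D Y = matDer dR X Y) ∧
    (∀ Z : Matrix (Fin n) (Fin n) R,
      (∀ Y W, matDer dR Z (Y + W) = matDer dR Z Y + matDer dR Z W) ∧
      (∀ Y W, matDer dR Z (Y * W) = matDer dR Z Y * W + Y * matDer dR Z W) ∧
      (∀ r : R, matDer dR Z (algebraMap R (Matrix (Fin n) (Fin n) R) r) =
        algebraMap R (Matrix (Fin n) (Fin n) R) (dR r))) := by
  refine ⟨?_, conv dR⟩
  rcases Nat.eq_zero_or_pos n with rfl | hn
  · exact ⟨0, fun Y => Subsingleton.elim _ _⟩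
  · exact exists_X dR ⟨0, hn⟩ D hadd hmul hext
end

section
/- Let C be a field of characteristic zero with zero derivation and let Z ∈ M_2(C) be the matrix with (1,2)-entry 1 and all other entries 0. Then (I_Z)^2 ≠ 0 but (I_Z)^3 = 0, where I_Z is the inner derivation Y ↦ ZY − YZ on M_2(C). Consequently, for no p, q is (M_2(C), I_Z) ⊗ (M_p(C), 0) differentially isomorphic to (M_q(C), 0). -/
open scoped TensorProduct

/-- For `Z = e₁₂ ∈ M₂(C)`, the inner derivation `I_Z` satisfies `I_Z² ≠ 0` and
`I_Z³ = 0`; consequently `(M₂(C), I_Z) ⊗ (M_p(C), 0)` is never differentially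
isomorphic to `(M_q(C), 0)`. -/
theorem stmt10 {C : Type*} [Field C] [CharZero C] :
    let Z : Matrix (Fin 2) (Fin 2) C := !![0, 1; 0, 0]
    let I : Module.End C (Matrix (Fin 2) (Fin 2) C) :=
      LinearMap.mulLeft C Z - LinearMap.mulRight C Z
    I ^ 2 ≠ 0 ∧ I ^ 3 = 0 ∧
    ∀ (p q : ℕ), 0 < p →
      ∀ e : (Matrix (Fin 2) (Fin 2) C ⊗[C] Matrix (Fin p) (Fin p) C) ≃ₐ[C]
        Matrix (Fin q) (Fin q) C,
        ¬ (∀ (Y : Matrix (Fin 2) (Fin 2) C) (S : Matrix (Fin p) (Fin p) C),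
          e ((Z * Y - Y * Z) ⊗ₜ[C] S) = 0) := by
  intro Z I
  refine ⟨?_, ?_, ?_⟩
  · intro h
    have h2 := congrFun (congrArg DFunLike.coe h) (!![0,0;1,0] : Matrix (Fin 2) (Fin 2) C)
    simp only [I, Z, pow_two, Module.End.mul_apply, LinearMap.sub_apply,
      LinearMap.mulLeft_apply, LinearMap.mulRight_apply, LinearMap.zero_apply] at h2
    have := congrFun (congrFun h2 0) 1
    simp [Matrix.mul_apply, Fin.sum_univ_two, Matrix.sub_apply] at this
    norm_num at this
  · refine LinearMap.ext fun Y => ?_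
    simp only [I, Z, pow_succ, pow_zero, Module.End.mul_apply, Module.End.one_apply,
      LinearMap.sub_apply, LinearMap.mulLeft_apply, LinearMap.mulRight_apply,
      LinearMap.zero_apply]
    ext i j
    fin_cases i <;> fin_cases j <;>
      simp [Matrix.mul_apply, Fin.sum_univ_two, Matrix.sub_apply, Matrix.vecMul,
        dotProduct, Matrix.vecHead, Matrix.vecTail]
  · intro p q hp e h
    have hpn : Nonempty (Fin p) := ⟨⟨0, hp⟩⟩
    have h0 := h !![0,0;1,0] 1
    have hz : ((Z * !![0,0;1,0] - !![0,0;1,0] * Z) ⊗ₜ[C] (1 : Matrix (Fin p) (Fin p) C)) = 0 := by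
      have := e.injective (by simpa using h0)
      simpa using this
    -- apply (rid) ∘ (id ⊗ eval at (0,0)) to hz
    let g : Matrix (Fin p) (Fin p) C →ₗ[C] C :=
      { toFun := fun S => S ⟨0, hp⟩ ⟨0, hp⟩
        map_add' := fun a b => rfl
        map_smul' := fun a b => rfl }
    let F : (Matrix (Fin 2) (Fin 2) C ⊗[C] Matrix (Fin p) (Fin p) C) →ₗ[C]
        Matrix (Fin 2) (Fin 2) C :=
      (TensorProduct.rid C (Matrix (Fin 2) (Fin 2) C)).toLinearMap ∘ₗ
        TensorProduct.map LinearMap.id g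
    have hA := congrArg F hz
    simp only [F, map_zero, LinearMap.comp_apply, TensorProduct.map_tmul,
      LinearMap.id_coe, id_eq, LinearEquiv.coe_toLinearMap, TensorProduct.rid_tmul] at hA
    have hg1 : g (1 : Matrix (Fin p) (Fin p) C) = 1 := by
      show (1 : Matrix (Fin p) (Fin p) C) ⟨0, hp⟩ ⟨0, hp⟩ = 1
      simp
    rw [hg1, one_smul] at hA
    have := congrFun (congrFun hA 0) 0
    simp [Z, Matrix.mul_apply, Fin.sum_univ_two, Matrix.sub_apply] at this
end

section
/- Let C be a field of characteristic zero and consider the differential field C(x) with derivation d/dx. If y ∈ C(x) satisfies y' = c·y for some nonzero constant c ∈ C, then y = 0. -/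
/-- In the differential field `C(x)` with derivation `d/dx` (the unique `C`-linear
derivation sending `x` to `1`), if `y' = c·y` for a nonzero constant `c ∈ C`, then
`y = 0`. -/
theorem stmt11 {C : Type*} [Field C] [CharZero C]
    (d : Derivation C (RatFunc C) (RatFunc C)) (hd : d RatFunc.X = 1)
    (y : RatFunc C) (c : C) (hc : c ≠ 0)
    (hy : d y = algebraMap C (RatFunc C) c * y) : y = 0 := by
  by_contra hy0
  set p := y.num with hp_def
  set q := y.denom with hq_def
  have hp : p ≠ 0 := RatFunc.num_ne_zero hy0
  have hq : q ≠ 0 := y.denom_ne_zero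
  -- the derivation agrees with the formal derivative on polynomials
  have key : ∀ f : Polynomial C, d (algebraMap (Polynomial C) (RatFunc C) f)
      = algebraMap (Polynomial C) (RatFunc C) (Polynomial.derivative f) := by
    intro f
    have h1 : d.compAlgebraMap (A := Polynomial C)
        = Polynomial.mkDerivation C (1 : RatFunc C) := by
      apply Polynomial.derivation_ext
      show d (algebraMap (Polynomial C) (RatFunc C) Polynomial.X) = _
      rw [RatFunc.algebraMap_X, hd, Polynomial.mkDerivation_X]
    have h2 : d.compAlgebraMap (A := Polynomial C) f
        = Polynomial.mkDerivation C (1 : RatFunc C) f := by rw [h1]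
    simpa [Derivation.compAlgebraMap, Polynomial.mkDerivation_apply,
      Algebra.smul_def] using h2
  have hqne : algebraMap (Polynomial C) (RatFunc C) q ≠ 0 := by
    simpa using hq
  have hyq : y * algebraMap (Polynomial C) (RatFunc C) q
      = algebraMap (Polynomial C) (RatFunc C) p := by
    exact ((div_eq_iff hqne).mp y.num_div_denom).symm
  -- differentiate y * q = p
  have hD : d y * algebraMap (Polynomial C) (RatFunc C) q
      + y * algebraMap (Polynomial C) (RatFunc C) (Polynomial.derivative q)
      = algebraMap (Polynomial C) (RatFunc C) (Polynomial.derivative p) := by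
    have := congrArg d hyq
    rw [d.leibniz, key, key] at this
    simpa [smul_eq_mul, mul_comm, add_comm] using this
  rw [hy] at hD
  -- multiply by q and rewrite y * q = p
  have hD2 : algebraMap C (RatFunc C) c * algebraMap (Polynomial C) (RatFunc C) p
        * algebraMap (Polynomial C) (RatFunc C) q
      + algebraMap (Polynomial C) (RatFunc C) p
        * algebraMap (Polynomial C) (RatFunc C) (Polynomial.derivative q)
      = algebraMap (Polynomial C) (RatFunc C) (Polynomial.derivative p)
        * algebraMap (Polynomial C) (RatFunc C) q := by
    linear_combination hD * algebraMap (Polynomial C) (RatFunc C) q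
      - (algebraMap C (RatFunc C) c * algebraMap (Polynomial C) (RatFunc C) q
        + algebraMap (Polynomial C) (RatFunc C) (Polynomial.derivative q)) * hyq
  -- transfer to a polynomial identity
  have hCc : algebraMap C (RatFunc C) c
      = algebraMap (Polynomial C) (RatFunc C) (Polynomial.C c) := by
    simp [RatFunc.algebraMap_C]
  rw [hCc] at hD2
  have hpoly : Polynomial.C c * p * q + p * Polynomial.derivative q
      = Polynomial.derivative p * q := by
    apply RatFunc.algebraMap_injective C
    push_cast [map_add, map_mul]
    simpa [map_add, map_mul] using hD2
  -- degree contradiction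
  have hE : Polynomial.C c * (p * q)
      = Polynomial.derivative p * q - p * Polynomial.derivative q := by
    rw [← hpoly]; ring
  have hdq : q.degree ≠ ⊥ := by simpa [Polynomial.degree_eq_bot] using hq
  have hdp : p.degree ≠ ⊥ := by simpa [Polynomial.degree_eq_bot] using hp
  have h1 : (Polynomial.derivative p * q).degree < p.degree + q.degree := by
    rw [Polynomial.degree_mul]
    exact WithBot.add_lt_add_right hdq (Polynomial.degree_derivative_lt hp)
  have h2 : (p * Polynomial.derivative q).degree < p.degree + q.degree := by
    rw [Polynomial.degree_mul]
    exact WithBot.add_lt_add_left hdp (Polynomial.degree_derivative_lt hq)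
  have hlt : (Polynomial.C c * (p * q)).degree < p.degree + q.degree := by
    rw [hE]
    exact lt_of_le_of_lt (Polynomial.degree_sub_le _ _) (max_lt h1 h2)
  rw [Polynomial.degree_mul, Polynomial.degree_C hc, zero_add,
    Polynomial.degree_mul] at hlt
  exact lt_irrefl _ hlt
end

section
/- Let C be a field of characteristic zero, λ ∈ C nonzero, and consider the differential algebra A = M_2(C(x)) ⊗_{C(x)} M_p(C(x)) with derivation D = ∂_{Z(λ)} ⊗ 1 + 1 ⊗ ∂_0, where Z(λ) = diag(1+λ,1). If b ∈ A is nonzero with D(b) = μb for some nonzero μ ∈ C, then μ = λ or μ = −λ. -/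
open scoped Kronecker

set_option synthInstance.maxHeartbeats 1000000

open Polynomial in
lemma aux_d_poly {C : Type*} [Field C] [CharZero C]
    (d : Derivation C (RatFunc C) (RatFunc C)) (hd : d RatFunc.X = 1)
    (f : C[X]) :
    d (algebraMap C[X] (RatFunc C) f) = algebraMap C[X] (RatFunc C) (derivative f) := by
  have h : Derivation.compAlgebraMap C[X] d = Polynomial.mkDerivation C (1 : RatFunc C) :=
    Polynomial.derivation_ext (by
      simp [Derivation.compAlgebraMap_apply, RatFunc.algebraMap_X, hd,
        Polynomial.mkDerivation_X])
  have h2 := congrArg (fun D : Derivation C C[X] (RatFunc C) => D f) h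
  simpa [Derivation.compAlgebraMap_apply, Polynomial.mkDerivation_apply,
    Algebra.smul_def] using h2

open Polynomial in
lemma aux_eig_zero {C : Type*} [Field C] [CharZero C]
    (d : Derivation C (RatFunc C) (RatFunc C)) (hd : d RatFunc.X = 1)
    (c : C) (hc : c ≠ 0) (y : RatFunc C)
    (hy : d y = algebraMap C (RatFunc C) c * y) : y = 0 := by
  by_contra h0
  set φ := algebraMap C[X] (RatFunc C) with hφ
  set P := y.num with hPdef
  set Q := y.denom with hQdef
  have hQ : Q ≠ 0 := y.denom_ne_zero
  have hP : P ≠ 0 := RatFunc.num_ne_zero h0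
  have hφQ : φ Q ≠ 0 := RatFunc.algebraMap_ne_zero hQ
  have hyk : y * φ Q = φ P := by
    rw [← RatFunc.num_div_denom y, div_mul_cancel₀]
    exact hφQ
  have h1 : d (φ P) = d y * φ Q + y * φ (derivative Q) := by
    rw [← hyk, Derivation.leibniz, aux_d_poly d hd, smul_eq_mul, smul_eq_mul]
    ring
  have h1' : φ (derivative P) = d y * φ Q + y * φ (derivative Q) := by
    rw [← aux_d_poly d hd, h1]
  set a := algebraMap C (RatFunc C) c with ha
  have h2 : φ (derivative P) * φ Q = a * (φ P * φ Q) + φ P * φ (derivative Q) := by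
    calc φ (derivative P) * φ Q = (d y * φ Q + y * φ (derivative Q)) * φ Q := by rw [h1']
      _ = d y * (φ Q * φ Q) + (y * φ Q) * φ (derivative Q) := by ring
      _ = (a * y) * (φ Q * φ Q) + φ P * φ (derivative Q) := by rw [hy, hyk]
      _ = a * ((y * φ Q) * φ Q) + φ P * φ (derivative Q) := by ring
      _ = a * (φ P * φ Q) + φ P * φ (derivative Q) := by rw [hyk]
  have h3 : derivative P * Q = Polynomial.C c * (P * Q) + P * derivative Q := by
    apply RatFunc.algebraMap_injective
    simpa only [map_mul, map_add, RatFunc.algebraMap_C, RatFunc.algebraMap_eq_C, ha, hφ] using h2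
  have h4 : Polynomial.C c * (P * Q) = - wronskian P Q := by
    rw [wronskian]
    linear_combination -h3
  have h5 : (Polynomial.C c * (P * Q)).degree < P.degree + Q.degree := by
    rw [h4, degree_neg]
    exact degree_wronskian_lt_add hP hQ
  have h6 : (Polynomial.C c * (P * Q)).degree = P.degree + Q.degree := by
    rw [degree_C_mul hc, degree_mul]
  rw [h6] at h5
  exact lt_irrefl _ h5

/-- Let `A = M₂(C(x)) ⊗ M_p(C(x))` with derivation `∂_{Z(λ)} ⊗ 1 + 1 ⊗ ∂_0`
(realized on `M_{2p}(C(x))` via the Kronecker product, `K = Z(λ) ⊗ 1`).  If a nonzero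
`b` satisfies `D(b) = μ b` with `μ ∈ C` nonzero, then `μ = λ` or `μ = -λ`. -/
theorem stmt14 {C : Type*} [Field C] [CharZero C]
    (d : Derivation C (RatFunc C) (RatFunc C)) (hd : d RatFunc.X = 1)
    (l : C) (hl : l ≠ 0) (p : ℕ) :
    let K : Matrix (Fin 2 × Fin p) (Fin 2 × Fin p) (RatFunc C) :=
      ((Matrix.diagonal ![1 + l, 1]).map (algebraMap C (RatFunc C))) ⊗ₖ
        (1 : Matrix (Fin p) (Fin p) (RatFunc C))
    ∀ b : Matrix (Fin 2 × Fin p) (Fin 2 × Fin p) (RatFunc C), b ≠ 0 →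
      ∀ μ : C, μ ≠ 0 →
        b.map ⇑d + (K * b - b * K) = algebraMap C (RatFunc C) μ • b →
        μ = l ∨ μ = -l := by
  intro K b hb μ hμ heq
  by_contra hor
  push_neg at hor
  obtain ⟨hml, hmn⟩ := hor
  have hKd : K = Matrix.diagonal
      (fun u : Fin 2 × Fin p => algebraMap C (RatFunc C) (![1 + l, 1] u.1)) := by
    ext ⟨i, k⟩ ⟨j, m⟩
    simp only [K, Matrix.kroneckerMap_apply, Matrix.map_apply, Matrix.diagonal_apply,
      Matrix.one_apply, Prod.mk.injEq]
    by_cases hij : i = j <;> by_cases hkm : k = m <;> simp [hij, hkm]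
  have hcon : ∀ i j : Fin 2, μ - ![1 + l, 1] i + ![1 + l, 1] j ≠ 0 := by
    intro i j h
    fin_cases i <;> fin_cases j <;>
      simp at h <;>
      first
        | exact hμ (by linear_combination h)
        | exact hml (by linear_combination h)
        | exact hmn (by linear_combination h)
        | exact h.elim
  apply hb
  ext u v
  have hthis := congrFun (congrFun heq u) v
  rw [hKd] at hthis
  simp only [Matrix.add_apply, Matrix.sub_apply, Matrix.map_apply, Matrix.smul_apply,
    Matrix.diagonal_mul, Matrix.mul_diagonal, smul_eq_mul] at hthis
  have hent : d (b u v) =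
      algebraMap C (RatFunc C) (μ - ![1 + l, 1] u.1 + ![1 + l, 1] v.1) * b u v := by
    rw [map_add, map_sub]
    linear_combination hthis
  have := aux_eig_zero d hd _ (hcon u.1 v.1) _ hent
  simpa using this
end

section
/- Let R be a commutative differential ring such that every Azumaya R-algebra A admits, for some n, m, an R-algebra isomorphism A ⊗_R M_n(R) ≅ M_m(R) (i.e. the Brauer monoid BM(R) is trivial). Then every differential Azumaya R-algebra A is equivalent in the differential Brauer monoid to some (M_q(R), ∂_Z): there exist p, q, Z ∈ M_q(R) and a differential isomorphism A ⊗_R (M_p(R), ∂_0) ≅ (M_q(R), ∂_Z). -/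
open scoped TensorProduct

section Aux

variable {R : Type*} [CommRing R] (dR : Derivation ℤ R R)

lemma mapDR_add {n : ℕ} (X Y : Matrix (Fin n) (Fin n) R) :
    (X + Y).map ⇑dR = X.map ⇑dR + Y.map ⇑dR := by
  ext i j; simp

lemma mapDR_mul {n : ℕ} (X Y : Matrix (Fin n) (Fin n) R) :
    (X * Y).map ⇑dR = X.map ⇑dR * Y + X * Y.map ⇑dR := by
  ext i j
  simp [Matrix.mul_apply, Finset.sum_add_distrib, add_comm, mul_comm]

lemma mapDR_smul {n : ℕ} (r : R) (Y : Matrix (Fin n) (Fin n) R) :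
    (r • Y).map ⇑dR = dR r • Y + r • Y.map ⇑dR := by
  ext i j
  simp only [Matrix.map_apply, Matrix.smul_apply, Matrix.add_apply, smul_eq_mul,
    Derivation.leibniz]
  ring

lemma mapDR_one {n : ℕ} :
    (1 : Matrix (Fin n) (Fin n) R).map ⇑dR = 0 := by
  ext i j
  simp only [Matrix.map_apply, Matrix.one_apply, Matrix.zero_apply]
  split <;> simp

lemma mapDR_algebraMap {n : ℕ} (r : R) :
    (algebraMap R (Matrix (Fin n) (Fin n) R) r).map ⇑dR
      = algebraMap R (Matrix (Fin n) (Fin n) R) (dR r) := by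
  ext i j
  simp only [Matrix.map_apply, Matrix.algebraMap_matrix_apply]
  split <;> simp

lemma sum_stdBasisMatrix_diag_eq_one {q : ℕ} :
    ∑ k : Fin q, Matrix.single k k (1 : R) = 1 := by
  ext i j
  rw [Matrix.sum_apply]
  by_cases h : i = j
  · subst h
    simp [Matrix.single, Matrix.one_apply]
  · have he : Finset.filter (fun x => x = i ∧ x = j) Finset.univ = (∅ : Finset (Fin q)) := by
      ext k
      simp only [Finset.mem_filter, Finset.mem_univ, true_and, Finset.notMem_empty, iff_false]
      rintro ⟨rfl, rfl⟩
      exact h rfl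
    simp [Matrix.single, Matrix.one_apply, h, he]

/-- Every derivation of a matrix algebra killing scalars is inner. -/
lemma matrix_derivation_inner {R : Type*} [CommRing R] {q : ℕ}
    (D : Matrix (Fin q) (Fin q) R → Matrix (Fin q) (Fin q) R)
    (hDadd : ∀ X Y, D (X + Y) = D X + D Y)
    (hDmul : ∀ X Y, D (X * Y) = D X * Y + X * D Y)
    (hDsc : ∀ r : R, D (algebraMap R _ r) = 0) :
    ∃ Z, ∀ X, D X = Z * X - X * Z := by
  have hD0 : D 0 = 0 := by
    have := hDadd 0 0; simpa using this.symm
  rcases Nat.eq_zero_or_pos q with hq | hq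
  · refine ⟨0, fun X => ?_⟩
    subst hq
    have hX : X = (0 : Matrix (Fin 0) (Fin 0) R) := by ext i; exact i.elim0
    simp [hX, hD0]
  · set i0 : Fin q := ⟨0, hq⟩
    have hDsmul : ∀ (r : R) X, D (r • X) = r • D X := by
      intro r X
      rw [Algebra.smul_def, hDmul, hDsc, zero_mul, zero_add, ← Algebra.smul_def]
    set Z : Matrix (Fin q) (Fin q) R :=
      ∑ k, D (Matrix.single k i0 1) * Matrix.single i0 k 1 with hZ
    have key : ∀ i j, D (Matrix.single i j (1 : R))
        = Z * Matrix.single i j 1 - Matrix.single i j 1 * Z := by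
      intro i j
      have h1 : Z * Matrix.single i j 1
          = D (Matrix.single i i0 1) * Matrix.single i0 j 1 := by
        rw [hZ, Finset.sum_mul, Finset.sum_eq_single i]
        · rw [mul_assoc, Matrix.single_mul_single_same, one_mul]
        · intro k _ hk
          rw [mul_assoc, Matrix.single_mul_single_of_ne (h := hk), mul_zero]
        · intro h; exact absurd (Finset.mem_univ i) h
      have h2 : Matrix.single i j 1 * Z
          = D (Matrix.single i i0 1) * Matrix.single i0 j 1
            - D (Matrix.single i j 1) := by
        rw [hZ, Finset.mul_sum]
        have hterm : ∀ k : Fin q,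
            Matrix.single i j (1 : R)
              * (D (Matrix.single k i0 1) * Matrix.single i0 k 1)
            = D (Matrix.single i j 1 * Matrix.single k i0 1)
                * Matrix.single i0 k 1
              - D (Matrix.single i j 1)
                * (Matrix.single k i0 1 * Matrix.single i0 k 1) := by
          intro k
          rw [hDmul, add_mul, mul_assoc, mul_assoc]
          abel
        calc ∑ k, Matrix.single i j (1 : R)
              * (D (Matrix.single k i0 1) * Matrix.single i0 k 1)
            = ∑ k, (D (Matrix.single i j 1 * Matrix.single k i0 1)
                * Matrix.single i0 k 1
              - D (Matrix.single i j 1)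
                * (Matrix.single k i0 1 * Matrix.single i0 k 1)) := by
              exact Finset.sum_congr rfl fun k _ => hterm k
          _ = (∑ k, D (Matrix.single i j 1 * Matrix.single k i0 1)
                * Matrix.single i0 k 1)
              - D (Matrix.single i j 1)
                * ∑ k, Matrix.single k i0 1 * Matrix.single i0 k 1 := by
              rw [Finset.sum_sub_distrib, Finset.mul_sum]
          _ = D (Matrix.single i i0 1) * Matrix.single i0 j 1
              - D (Matrix.single i j 1) := by
              congr 1
              · rw [Finset.sum_eq_single j]
                · rw [Matrix.single_mul_single_same, one_mul]
                · intro k _ hk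
                  rw [Matrix.single_mul_single_of_ne (h := Ne.symm hk), hD0, zero_mul]
                · intro h; exact absurd (Finset.mem_univ j) h
              · have : ∑ k : Fin q, Matrix.single k i0 (1:R) * Matrix.single i0 k 1
                    = 1 := by
                  calc ∑ k : Fin q, Matrix.single k i0 (1:R) * Matrix.single i0 k 1
                      = ∑ k : Fin q, Matrix.single k k (1:R) := by
                        refine Finset.sum_congr rfl fun k _ => ?_
                        rw [Matrix.single_mul_single_same, one_mul]
                    _ = 1 := sum_stdBasisMatrix_diag_eq_one
                rw [this, mul_one]
      rw [h1, h2]; abel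
    set L : Matrix (Fin q) (Fin q) R →ₗ[R] Matrix (Fin q) (Fin q) R :=
      { toFun := D, map_add' := hDadd, map_smul' := hDsmul }
    set adZ : Matrix (Fin q) (Fin q) R →ₗ[R] Matrix (Fin q) (Fin q) R :=
      { toFun := fun X => Z * X - X * Z,
        map_add' := by intro X Y; noncomm_ring,
        map_smul' := by intro r X; simp [mul_smul_comm, smul_mul_assoc, smul_sub] }
    have hLZ : L = adZ := by
      apply (Matrix.stdBasis R (Fin q) (Fin q)).ext
      rintro ⟨i, j⟩
      rw [Matrix.stdBasis_eq_single]
      exact key i j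
    exact ⟨Z, fun X => congrFun (congrArg (fun f => f.toFun) hLZ) X⟩

end Aux

/-- The canonical map `A ⊗[R] Aᵐᵒᵖ →ₗ[R] End_R A`, `a ⊗ b ↦ (x ↦ a * x * b)`. -/
noncomputable def azumayaMap (R A : Type*) [CommRing R] [Ring A] [Algebra R A] :
    A ⊗[R] Aᵐᵒᵖ →ₗ[R] Module.End R A :=
  TensorProduct.lift <| LinearMap.mk₂ R
    (fun a b => LinearMap.mulLeft R a ∘ₗ LinearMap.mulRight R b.unop)
    (fun a a' b => by ext x; simp [add_mul])
    (fun r a b => by ext x; simp [smul_mul_assoc])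
    (fun a b b' => by ext x; simp [mul_add])
    (fun r a b => by ext x; simp [mul_smul_comm])

/-- `A` is an Azumaya (central separable) `R`-algebra. -/
def IsAzumayaAlg (R A : Type*) [CommRing R] [Ring A] [Algebra R A] : Prop :=
  Module.Finite R A ∧ Module.Projective R A ∧ FaithfulSMul R A ∧
    Function.Bijective (azumayaMap R A)

universe u

/-- If the Brauer monoid of `R` is trivial (every Azumaya `R`-algebra is stably
matrix), then every differential Azumaya `R`-algebra is, after tensoring with a
matrix algebra with trivial derivation, differentially isomorphic to some
`(M_q(R), ∂_Z)`. -/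
theorem stmt15 {R A : Type u} [CommRing R] [Ring A] [Algebra R A]
    (dR : Derivation ℤ R R)
    (hBr : ∀ (B : Type u) [Ring B] [Algebra R B], IsAzumayaAlg R B →
      ∃ n m : ℕ, Nonempty ((B ⊗[R] Matrix (Fin n) (Fin n) R) ≃ₐ[R]
        Matrix (Fin m) (Fin m) R))
    (hAz : IsAzumayaAlg R A)
    (dA : A → A)
    (hadd : ∀ x y, dA (x + y) = dA x + dA y)
    (hmul : ∀ x y, dA (x * y) = dA x * y + x * dA y)
    (hext : ∀ r, dA (algebraMap R A r) = algebraMap R A (dR r)) :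
    ∃ (p q : ℕ) (Z : Matrix (Fin q) (Fin q) R)
      (e : (A ⊗[R] Matrix (Fin p) (Fin p) R) ≃ₐ[R] Matrix (Fin q) (Fin q) R),
      ∀ (a : A) (Y : Matrix (Fin p) (Fin p) R),
        e (dA a ⊗ₜ[R] Y + a ⊗ₜ[R] Y.map ⇑dR) =
          (e (a ⊗ₜ[R] Y)).map ⇑dR +
            (Z * e (a ⊗ₜ[R] Y) - e (a ⊗ₜ[R] Y) * Z) := by
  obtain ⟨p, q, ⟨e⟩⟩ := hBr A hAz
  have hdA_smul : ∀ (r : R) (a : A), dA (r • a) = dR r • a + r • dA a := by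
    intro r a
    rw [Algebra.smul_def, hmul, hext, ← Algebra.smul_def, ← Algebra.smul_def]
  -- the derivation on the tensor product, as an additive map
  set f : A →+ Matrix (Fin p) (Fin p) R →+ A ⊗[R] Matrix (Fin p) (Fin p) R :=
    AddMonoidHom.mk'
      (fun a => AddMonoidHom.mk'
        (fun Y => dA a ⊗ₜ[R] Y + a ⊗ₜ[R] Y.map ⇑dR)
        (fun Y W => by
          rw [mapDR_add]
          simp only [TensorProduct.tmul_add]
          abel))
      (fun a b => by
        ext Y
        simp only [AddMonoidHom.mk'_apply, AddMonoidHom.add_apply, hadd,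
          TensorProduct.add_tmul]
        abel) with hf
  have hbal : ∀ (r : R) (a : A) (Y : Matrix (Fin p) (Fin p) R),
      f (r • a) Y = f a (r • Y) := by
    intro r a Y
    simp only [hf, AddMonoidHom.mk'_apply, hdA_smul, mapDR_smul,
      TensorProduct.add_tmul, TensorProduct.tmul_add, TensorProduct.smul_tmul]
    abel
  set δ : A ⊗[R] Matrix (Fin p) (Fin p) R →+ A ⊗[R] Matrix (Fin p) (Fin p) R :=
    TensorProduct.liftAddHom f hbal with hδdef
  have hδ : ∀ (a : A) (Y : Matrix (Fin p) (Fin p) R),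
      δ (a ⊗ₜ[R] Y) = dA a ⊗ₜ[R] Y + a ⊗ₜ[R] Y.map ⇑dR := fun a Y => by
    rw [hδdef, TensorProduct.liftAddHom_tmul, hf]
    rfl
  have hδmul : ∀ u v, δ (u * v) = δ u * v + u * δ v := by
    intro u v
    induction u using TensorProduct.induction_on with
    | zero => simp
    | tmul a Y =>
      induction v using TensorProduct.induction_on with
      | zero => simp
      | tmul b W =>
        rw [Algebra.TensorProduct.tmul_mul_tmul, hδ, hδ, hδ, hmul a b, mapDR_mul]
        simp only [TensorProduct.add_tmul, TensorProduct.tmul_add, add_mul, mul_add,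
          Algebra.TensorProduct.tmul_mul_tmul]
        abel
      | add v1 v2 h1 h2 =>
        rw [mul_add, map_add, h1, h2, map_add]
        simp only [mul_add, add_mul]
        abel
    | add u1 u2 h1 h2 =>
      rw [add_mul, map_add, h1, h2, map_add]
      simp only [mul_add, add_mul]
      abel
  -- transport to the matrix algebra
  set D : Matrix (Fin q) (Fin q) R → Matrix (Fin q) (Fin q) R :=
    fun X => e (δ (e.symm X)) with hD
  set D' : Matrix (Fin q) (Fin q) R → Matrix (Fin q) (Fin q) R :=
    fun X => D X - X.map ⇑dR with hD'
  have hDmul : ∀ X Y, D (X * Y) = D X * Y + X * D Y := by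
    intro X Y
    rw [hD]
    simp only [map_mul, hδmul, map_add]
    rw [AlgEquiv.apply_symm_apply, AlgEquiv.apply_symm_apply]
  have hD'add : ∀ X Y, D' (X + Y) = D' X + D' Y := by
    intro X Y
    simp only [hD', hD, map_add, mapDR_add]
    abel
  have hD'mul : ∀ X Y, D' (X * Y) = D' X * Y + X * D' Y := by
    intro X Y
    simp only [hD', hDmul, mapDR_mul, sub_mul, mul_sub]
    abel
  have hD'sc : ∀ r : R, D' (algebraMap R _ r) = 0 := by
    intro r
    have h1 : (e.symm : Matrix (Fin q) (Fin q) R → A ⊗[R] Matrix (Fin p) (Fin p) R)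
        (algebraMap R _ r) = algebraMap R _ r := e.symm.commutes r
    have h2 : (algebraMap R (A ⊗[R] Matrix (Fin p) (Fin p) R) r)
        = (algebraMap R A r) ⊗ₜ[R] (1 : Matrix (Fin p) (Fin p) R) := by
      rw [Algebra.TensorProduct.algebraMap_apply]
    have h3 : δ ((algebraMap R A r) ⊗ₜ[R] (1 : Matrix (Fin p) (Fin p) R))
        = algebraMap R (A ⊗[R] Matrix (Fin p) (Fin p) R) (dR r) := by
      rw [hδ, hext, mapDR_one, TensorProduct.tmul_zero, add_zero, Algebra.TensorProduct.algebraMap_apply]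
    simp only [hD', hD, h1, h2, h3]
    rw [AlgEquiv.commutes, mapDR_algebraMap, sub_self]
  obtain ⟨Z, hZ⟩ := matrix_derivation_inner D' hD'add hD'mul hD'sc
  refine ⟨p, q, Z, e, fun a Y => ?_⟩
  have hL : e (dA a ⊗ₜ[R] Y + a ⊗ₜ[R] Y.map ⇑dR) = D (e (a ⊗ₜ[R] Y)) := by
    simp only [hD]
    rw [AlgEquiv.symm_apply_apply, hδ]
  have h := hZ (e (a ⊗ₜ[R] Y))
  simp only [hD'] at h
  rw [hL, ← h]
  abel
end

section
/- Let R be a commutative differential ring, and let A be a differential Azumaya R-algebra such that A ⊗_R B is differentially isomorphic to (M_n(R), ∂_0) for some differential Azumaya R-algebra B. Then the multiplication map R ⊗_{R^D} A^D → A, r ⊗ a ↦ ra, is an isomorphism of differential R-algebras, where A^D = {a ∈ A : D_A(a) = 0} and R^D = {r ∈ R : D_R(r) = 0}. -/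
open scoped TensorProduct

/-- `A` is an Azumaya (central separable) `R`-algebra. -/
def IsAzumaya' (R A : Type*) [CommRing R] [Ring A] [Algebra R A] : Prop :=
  Module.Finite R A ∧ Module.Projective R A ∧ FaithfulSMul R A ∧
    Function.Bijective (azumayaMap R A)

/-- The subring of constants of a commutative differential ring. -/
def constants {R : Type*} [CommRing R] (d : Derivation ℤ R R) : Subring R where
  carrier := {r | d r = 0}
  zero_mem' := by simp
  one_mem' := by simp
  add_mem' := by
    intro a b ha hb
    simp only [Set.mem_setOf_eq] at *
    simp [ha, hb]
  neg_mem' := by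
    intro a ha
    simp only [Set.mem_setOf_eq] at *
    simp [ha]
  mul_mem' := by
    intro a b ha hb
    simp only [Set.mem_setOf_eq] at *
    simp [Derivation.leibniz, ha, hb]

set_option synthInstance.maxHeartbeats 1000000
set_option maxHeartbeats 2000000

/-- If a differential Azumaya `R`-algebra `A` is a differential tensor factor of a
matrix algebra with trivial (entrywise) derivation, then the multiplication map
`R ⊗_{R^D} A^D → A`, `r ⊗ a ↦ r • a`, is an isomorphism of differential
`R`-algebras (here `A^D` is the `R^D`-submodule of constants of `A`, and the
derivation on the tensor product is `D_R ⊗ 1`). -/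
theorem stmt16 {R A B : Type*} [CommRing R] [Ring A] [Algebra R A]
    [Ring B] [Algebra R B]
    (dR : Derivation ℤ R R)
    (dA : A → A) (dB : B → B)
    (hAadd : ∀ x y, dA (x + y) = dA x + dA y)
    (hAmul : ∀ x y, dA (x * y) = dA x * y + x * dA y)
    (hAext : ∀ r, dA (algebraMap R A r) = algebraMap R A (dR r))
    (hBadd : ∀ x y, dB (x + y) = dB x + dB y)
    (hBmul : ∀ x y, dB (x * y) = dB x * y + x * dB y)
    (hBext : ∀ r, dB (algebraMap R B r) = algebraMap R B (dR r))
    (hAz : IsAzumaya' R A) (hBz : IsAzumaya' R B)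
    {n : ℕ}
    (e : (A ⊗[R] B) ≃ₐ[R] Matrix (Fin n) (Fin n) R)
    (he : ∀ (a : A) (b : B),
      e (dA a ⊗ₜ[R] b + a ⊗ₜ[R] dB b) = (e (a ⊗ₜ[R] b)).map ⇑dR) :
    ∃ Ac : Submodule ↥(constants dR) A,
      (∀ a : A, a ∈ Ac ↔ dA a = 0) ∧
      ∃ f : (R ⊗[↥(constants dR)] ↥Ac) ≃ₗ[↥(constants dR)] A,
        (∀ (r : R) (a : Ac), f (r ⊗ₜ[↥(constants dR)] a) = r • (a : A)) ∧
        (∀ (r : R) (a : Ac),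
          f (dR r ⊗ₜ[↥(constants dR)] a) = dA (f (r ⊗ₜ[↥(constants dR)] a))) := by
  classical
  have hA0 : dA 0 = 0 := by
    have h := hAadd 0 0
    rw [add_zero] at h
    exact (left_eq_add.mp h)
  have hA1 : dA 1 = 0 := by
    have h := hAmul 1 1
    rw [mul_one, one_mul, mul_one] at h
    exact (left_eq_add.mp h)
  have hB1 : dB 1 = 0 := by
    have h := hBmul 1 1
    rw [mul_one, one_mul, mul_one] at h
    exact (left_eq_add.mp h)
  have hdsmul : ∀ (r : R) (x : A), dA (r • x) = dR r • x + r • dA x := by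
    intro r x
    rw [Algebra.smul_def, hAmul, hAext, ← Algebra.smul_def, ← Algebra.smul_def]
  set C := constants dR with hC
  let Ac : Submodule ↥C A :=
    { carrier := {a | dA a = 0}
      add_mem' := by
        intro a b ha hb
        simp only [Set.mem_setOf_eq] at *
        rw [hAadd, ha, hb, add_zero]
      zero_mem' := hA0
      smul_mem' := by
        intro c a ha
        simp only [Set.mem_setOf_eq] at *
        have hc : dR (c : R) = 0 := c.2
        show dA (c • a) = 0
        rw [show c • a = (c : R) • a from rfl, hdsmul, hc, zero_smul, ha, smul_zero,
          add_zero]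
    }
  have hmem : ∀ a : A, a ∈ Ac ↔ dA a = 0 := fun a => Iff.rfl
  rcases Nat.eq_zero_or_pos n with hn | hn
  · -- degenerate case : the matrix algebra is trivial
    have hM : Subsingleton (Matrix (Fin n) (Fin n) R) := by subst hn; infer_instance
    have hT : Subsingleton (A ⊗[R] B) := by
      haveI := hM
      exact e.toEquiv.subsingleton
    haveI hFA := hAz.2.2.1
    have hz : ∀ (f : B →ₗ[R] R) (b : B), f b = 0 := by
      intro f b
      let φ : A ⊗[R] B →ₗ[R] A := TensorProduct.lift
        (LinearMap.mk₂ R (fun a b => f b • a)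
          (fun a a' b => by simp [smul_add])
          (fun r a b => by simp [smul_comm r])
          (fun a b b' => by simp [add_smul])
          (fun r a b => by simp [mul_smul]))
      refine eq_of_smul_eq_smul (α := A) (fun a => ?_)
      have h1 : φ (a ⊗ₜ b) = f b • a := by simp [φ]
      rw [zero_smul, ← h1, Subsingleton.elim (a ⊗ₜ[R] b) 0, map_zero]
    haveI hBsub : Subsingleton B := by
      obtain ⟨sp, hsp⟩ := Module.projective_def'.mp hBz.2.1
      have key : ∀ b : B, b = 0 := by
        intro b
        have hzz : sp b = 0 := by
          ext i
          exact hz ((Finsupp.lapply i).comp sp) b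
        have h2 := LinearMap.congr_fun hsp b
        simp only [LinearMap.coe_comp, Function.comp_apply, LinearMap.id_apply] at h2
        rw [hzz, map_zero] at h2
        exact h2.symm
      exact ⟨fun x y => by rw [key x, key y]⟩
    haveI hFB := hBz.2.2.1
    haveI hRsub : Subsingleton R :=
      ⟨fun r r' => eq_of_smul_eq_smul (α := B) (fun b => Subsingleton.elim _ _)⟩
    haveI hAsub : Subsingleton A := by
      refine ⟨fun a b => ?_⟩
      rw [← one_smul R a, ← one_smul R b, Subsingleton.elim (1 : R) (0 : R), zero_smul,
        zero_smul]
    haveI hCsub : Subsingleton ↥C := ⟨fun x y => Subtype.ext (Subsingleton.elim _ _)⟩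
    haveI hTCsub : Subsingleton (R ⊗[↥C] ↥Ac) := Module.subsingleton ↥C _
    refine ⟨Ac, hmem, LinearEquiv.ofLinear (0 : R ⊗[↥C] ↥Ac →ₗ[↥C] A) 0
      (LinearMap.ext fun x => Subsingleton.elim _ _)
      (LinearMap.ext fun x => Subsingleton.elim _ _), ?_, ?_⟩
    · intro r a; exact Subsingleton.elim _ _
    · intro r a; exact Subsingleton.elim _ _
  · -- main case
    let i₀ : Fin n := ⟨0, hn⟩
    let τ : B →ₗ[R] R :=
      { toFun := fun b => e (1 ⊗ₜ b) i₀ i₀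
        map_add' := fun b b' => by simp [TensorProduct.tmul_add]
        map_smul' := fun r b => by simp [TensorProduct.tmul_smul] }
    have hτapp : ∀ b, τ b = e (1 ⊗ₜ b) i₀ i₀ := fun b => rfl
    have hτ1 : τ 1 = 1 := by
      show e (1 ⊗ₜ 1) i₀ i₀ = 1
      rw [← Algebra.TensorProduct.one_def, map_one, Matrix.one_apply_eq]
    have hτd : ∀ b, τ (dB b) = dR (τ b) := by
      intro b
      have h := he 1 b
      rw [hA1, TensorProduct.zero_tmul, zero_add] at h
      show e (1 ⊗ₜ dB b) i₀ i₀ = dR (e (1 ⊗ₜ b) i₀ i₀)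
      rw [h, Matrix.map_apply]
    let σ : A ⊗[R] B →ₗ[R] A := TensorProduct.lift
      (LinearMap.mk₂ R (fun a b => τ b • a)
        (fun a a' b => by simp [smul_add])
        (fun r a b => by simp [smul_comm r])
        (fun a b b' => by simp [add_smul])
        (fun r a b => by simp [smul_smul]))
    have hσ : ∀ (a : A) (b : B), σ (a ⊗ₜ b) = τ b • a := fun a b => rfl
    let s : Matrix (Fin n) (Fin n) R →ₗ[R] A := σ ∘ₗ e.symm.toLinearMap
    have hs : ∀ m, s m = σ (e.symm m) := fun m => rfl
    let jj : A →ₗ[R] Matrix (Fin n) (Fin n) R :=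
      e.toLinearMap ∘ₗ ((TensorProduct.mk R A B).flip 1)
    have hjapp : ∀ a : A, jj a = e (a ⊗ₜ 1) := fun a => rfl
    have hsj : ∀ a : A, s (jj a) = a := by
      intro a
      show σ (e.symm (e (a ⊗ₜ 1))) = a
      rw [AlgEquiv.symm_apply_apply, hσ, hτ1, one_smul]
    have hjd : ∀ a, jj (dA a) = (jj a).map ⇑dR := by
      intro a
      have h := he a 1
      rw [hB1, TensorProduct.tmul_zero, add_zero] at h
      rw [hjapp, hjapp]
      exact h
    have hσd : ∀ t : A ⊗[R] B, dA (σ t) = σ (e.symm ((e t).map ⇑dR)) := by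
      intro t
      induction t using TensorProduct.induction_on with
      | zero =>
        rw [map_zero, hA0, map_zero, Matrix.map_zero _ dR.map_zero, map_zero, map_zero]
      | tmul a b =>
        have h := he a b
        calc dA (σ (a ⊗ₜ b)) = dA (τ b • a) := by rw [hσ]
          _ = dR (τ b) • a + τ b • dA a := hdsmul _ _
          _ = τ b • dA a + τ (dB b) • a := by rw [hτd, add_comm]
          _ = σ (dA a ⊗ₜ b + a ⊗ₜ dB b) := by rw [map_add, hσ, hσ]
          _ = σ (e.symm ((e (a ⊗ₜ b)).map ⇑dR)) := by
              rw [← h, AlgEquiv.symm_apply_apply]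
      | add x y hx hy =>
        calc dA (σ (x + y)) = dA (σ x + σ y) := by rw [map_add]
          _ = dA (σ x) + dA (σ y) := hAadd _ _
          _ = σ (e.symm ((e x).map ⇑dR)) + σ (e.symm ((e y).map ⇑dR)) := by rw [hx, hy]
          _ = σ (e.symm ((e (x + y)).map ⇑dR)) := by
              rw [map_add, Matrix.map_add _ dR.map_add, map_add, map_add]
    have hsd : ∀ m, dA (s m) = s (m.map ⇑dR) := by
      intro m
      have h := hσd (e.symm m)
      rwa [AlgEquiv.apply_symm_apply] at h
    have hE0 : ∀ i k : Fin n, (Matrix.single i k (1 : R)).map ⇑dR = 0 := by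
      intro i k
      ext i' k'
      simp [Matrix.map_apply, Matrix.single, Matrix.of_apply, apply_ite (⇑dR)]
    let cE : Fin n → Fin n → ↥Ac := fun i k =>
      ⟨s (Matrix.single i k (1 : R)), by
        show dA (s (Matrix.single i k (1 : R))) = 0
        rw [hsd, hE0, map_zero]⟩
    have hcE : ∀ i k, (cE i k : A) = s (Matrix.single i k (1 : R)) :=
      fun i k => rfl
    have hssum : ∀ m : Matrix (Fin n) (Fin n) R,
        ∑ i, ∑ k, m i k • s (Matrix.single i k (1 : R)) = s m := by
      intro m
      calc ∑ i, ∑ k, m i k • s (Matrix.single i k (1 : R))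
          = ∑ i, ∑ k, s (Matrix.single i k (m i k)) := by
            refine Finset.sum_congr rfl fun i _ => Finset.sum_congr rfl fun k _ => ?_
            rw [← map_smul, Matrix.smul_single, smul_eq_mul, mul_one]
        _ = s (∑ i, ∑ k, Matrix.single i k (m i k)) := by
            rw [map_sum]
            exact Finset.sum_congr rfl fun i _ => (map_sum s _ _).symm
        _ = s m := by rw [← Matrix.matrix_eq_sum_single]
    let g : R ⊗[↥C] ↥Ac →ₗ[↥C] A := TensorProduct.lift
      (LinearMap.mk₂ ↥C (fun (r : R) (a : ↥Ac) => r • (a : A))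
        (fun r r' a => add_smul r r' _)
        (fun c r a => mul_smul (c : R) r _)
        (fun r a a' => by simp [smul_add])
        (fun c r a => by
          have h1 : ((c • a : ↥Ac) : A) = (c : R) • (a : A) := rfl
          show r • ((c • a : ↥Ac) : A) = c • (r • (a : A))
          rw [h1, smul_comm]
          rfl))
    have hg : ∀ (r : R) (a : ↥Ac), g (r ⊗ₜ a) = r • (a : A) := fun r a => rfl
    let h : A →ₗ[↥C] R ⊗[↥C] ↥Ac :=
      { toFun := fun a => ∑ i, ∑ k, (jj a i k) ⊗ₜ[↥C] cE i k
        map_add' := by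
          intro a a'
          rw [← Finset.sum_add_distrib]
          refine Finset.sum_congr rfl fun i _ => ?_
          rw [← Finset.sum_add_distrib]
          refine Finset.sum_congr rfl fun k _ => ?_
          rw [map_add, Matrix.add_apply, TensorProduct.add_tmul]
        map_smul' := by
          intro c a
          show ∑ i, ∑ k, (jj (c • a) i k) ⊗ₜ[↥C] cE i k
              = c • ∑ i, ∑ k, (jj a i k) ⊗ₜ[↥C] cE i k
          rw [Finset.smul_sum]
          refine Finset.sum_congr rfl fun i _ => ?_
          rw [Finset.smul_sum]
          refine Finset.sum_congr rfl fun k _ => ?_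
          have h1 : jj (c • a) = (c : R) • jj a := by
            rw [show c • a = (c : R) • a from rfl, map_smul]
          rw [h1, Matrix.smul_apply, TensorProduct.smul_tmul']
          rfl
      }
    have hgh : g.comp h = LinearMap.id := by
      refine LinearMap.ext fun a => ?_
      show g (∑ i, ∑ k, (jj a i k) ⊗ₜ[↥C] cE i k) = a
      rw [map_sum]
      calc ∑ i, g (∑ k, (jj a i k) ⊗ₜ[↥C] cE i k)
          = ∑ i, ∑ k, (jj a i k) • (cE i k : A) := by
            refine Finset.sum_congr rfl fun i _ => ?_
            rw [map_sum]
            exact Finset.sum_congr rfl fun k _ => hg _ _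
        _ = ∑ i, ∑ k, (jj a i k) • s (Matrix.single i k (1 : R)) := rfl
        _ = s (jj a) := hssum _
        _ = a := hsj a
    have hhg : h.comp g = LinearMap.id := by
      refine TensorProduct.ext' fun r c => ?_
      show h (g (r ⊗ₜ c)) = r ⊗ₜ c
      rw [hg]
      have hc0 : dA (c : A) = 0 := c.2
      have hconst : ∀ i k, dR (jj (c : A) i k) = 0 := by
        intro i k
        have h0 : (jj (c : A)).map ⇑dR = 0 := by
          rw [← hjd, hc0, map_zero]
        calc dR (jj (c : A) i k) = ((jj (c : A)).map ⇑dR) i k := (Matrix.map_apply).symm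
          _ = 0 := by rw [h0]; rfl
      let ξ : Fin n → Fin n → ↥C := fun i k => ⟨jj (c : A) i k, hconst i k⟩
      show (∑ i, ∑ k, (jj (r • (c : A)) i k) ⊗ₜ[↥C] cE i k) = r ⊗ₜ c
      have hrc : ∀ i k, jj (r • (c : A)) i k = r * jj (c : A) i k := by
        intro i k
        rw [map_smul, Matrix.smul_apply, smul_eq_mul]
      calc (∑ i, ∑ k, (jj (r • (c : A)) i k) ⊗ₜ[↥C] cE i k)
          = ∑ i, ∑ k, r ⊗ₜ[↥C] (ξ i k • cE i k) := by
            refine Finset.sum_congr rfl fun i _ => Finset.sum_congr rfl fun k _ => ?_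
            rw [hrc, show r * jj (c : A) i k = ξ i k • r from mul_comm _ _,
              TensorProduct.smul_tmul]
        _ = r ⊗ₜ[↥C] (∑ i, ∑ k, ξ i k • cE i k) := by
            rw [TensorProduct.tmul_sum]
            exact Finset.sum_congr rfl fun i _ => (TensorProduct.tmul_sum _ _ _).symm
        _ = r ⊗ₜ c := by
            congr 1
            apply Subtype.ext
            push_cast
            calc (∑ i, ∑ k, ((ξ i k • cE i k : ↥Ac) : A))
                = ∑ i, ∑ k, (jj (c : A) i k) • s (Matrix.single i k (1 : R)) := by
                  refine Finset.sum_congr rfl fun i _ => Finset.sum_congr rfl fun k _ => ?_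
                  rw [SetLike.val_smul]
                  rfl
              _ = s (jj (c : A)) := hssum _
              _ = (c : A) := hsj _
    refine ⟨Ac, hmem, LinearEquiv.ofLinear g h hgh hhg, ?_, ?_⟩
    · intro r a
      exact hg r a
    · intro r a
      show g (dR r ⊗ₜ a) = dA (g (r ⊗ₜ a))
      rw [hg, hg, hdsmul, show dA (a : A) = 0 from a.2, smul_zero, add_zero]
end
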